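/- arXiv:2210.09702 — 6 statements merged into one kernel-verified Lean document; each statement's English description precedes it below -/
import Mathlib

section
/- Let x1, x2, x3 be nonzero complex numbers and let M be the 3×3 matrix with entries M_{jk} = x_j^{2^{k-1}} − x_j^{-2^{k-1}}. Then det(M) = (∏_{j=1}^3 (x_j − x_j^{-1})) · (∏_{k=1}^3 (x_k + x_k^{-1} − x_{k+1} − x_{k+1}^{-1})) · (∑_{ℓ=1}^3 (x_ℓ + x_ℓ^{-1})), where indices in the middle product are taken modulo 3. -/
open Matrix

lemma aux2 (x : ℂ) : x ^ 2 - x⁻¹ ^ 2 = (x - x⁻¹) * (x + x⁻¹) := by ring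

lemma aux4 (x : ℂ) (hx : x ≠ 0) :
    x ^ 4 - x⁻¹ ^ 4 = (x - x⁻¹) * (x + x⁻¹) * ((x + x⁻¹) ^ 2 - 2) := by
  have h : x * x⁻¹ = 1 := mul_inv_cancel₀ hx
  linear_combination (2 * (x⁻¹ ^ 2 - x ^ 2)) * h

/-- det of the 3×3 matrix with entries x_j^(2^(k-1)) − x_j^(−2^(k-1)). -/
theorem stmt_4 (x1 x2 x3 : ℂ) (h1 : x1 ≠ 0) (h2 : x2 ≠ 0) (h3 : x3 ≠ 0) :
    Matrix.det !![x1 - x1⁻¹, x1 ^ 2 - x1⁻¹ ^ 2, x1 ^ 4 - x1⁻¹ ^ 4;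
                  x2 - x2⁻¹, x2 ^ 2 - x2⁻¹ ^ 2, x2 ^ 4 - x2⁻¹ ^ 4;
                  x3 - x3⁻¹, x3 ^ 2 - x3⁻¹ ^ 2, x3 ^ 4 - x3⁻¹ ^ 4] =
      ((x1 - x1⁻¹) * (x2 - x2⁻¹) * (x3 - x3⁻¹)) *
      ((x1 + x1⁻¹ - x2 - x2⁻¹) * (x2 + x2⁻¹ - x3 - x3⁻¹) * (x3 + x3⁻¹ - x1 - x1⁻¹)) *
      ((x1 + x1⁻¹) + (x2 + x2⁻¹) + (x3 + x3⁻¹)) := by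
  rw [Matrix.det_fin_three]
  simp only [Matrix.of_apply, Matrix.cons_val', Matrix.cons_val_zero, Matrix.cons_val_one, Matrix.cons_val_two, Matrix.head_cons, Matrix.tail_cons, Matrix.empty_val', Matrix.cons_val_fin_one, Matrix.head_fin_const]
  norm_num
  simp only [← inv_pow]
  rw [aux2 x1, aux2 x2, aux2 x3, aux4 x1 h1, aux4 x2 h2, aux4 x3 h3]
  ring
end

section
/- Let x1, x2, x3 be distinct complex numbers and c1, c2, c3 complex numbers with c1·x1^r + c2·x2^r + c3·x3^r = 0 for all r ∈ {1, 2, −1, −2}, all x_j nonzero, and c1 + c2 + c3 ≠ 0. Then x_j² = x_{j+1}·x_{j+2} for each j (indices mod 3). -/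
/-- If c1 x1^r + c2 x2^r + c3 x3^r = 0 for r ∈ {1,2,−1,−2}, with x1,x2,x3 distinct
and nonzero and c1 + c2 + c3 ≠ 0, then x_j² = x_{j+1} x_{j+2} for each j (mod 3). -/
theorem stmt_5 (x1 x2 x3 c1 c2 c3 : ℂ)
    (hx1 : x1 ≠ 0) (hx2 : x2 ≠ 0) (hx3 : x3 ≠ 0)
    (h12 : x1 ≠ x2) (h23 : x2 ≠ x3) (h13 : x1 ≠ x3)
    (hrel : ∀ r : ℤ, r = 1 ∨ r = 2 ∨ r = -1 ∨ r = -2 →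
      c1 * x1 ^ r + c2 * x2 ^ r + c3 * x3 ^ r = 0)
    (hc : c1 + c2 + c3 ≠ 0) :
    x1 ^ 2 = x2 * x3 ∧ x2 ^ 2 = x3 * x1 ∧ x3 ^ 2 = x1 * x2 := by
  have h1 : c1 * x1 + c2 * x2 + c3 * x3 = 0 := by
    simpa using hrel 1 (by norm_num)
  have h2 : c1 * x1 ^ 2 + c2 * x2 ^ 2 + c3 * x3 ^ 2 = 0 := by
    have := hrel 2 (by norm_num); norm_num [zpow_two, sq] at this; linear_combination this
  have hm1 : c1 * x1⁻¹ + c2 * x2⁻¹ + c3 * x3⁻¹ = 0 := by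
    simpa using hrel (-1) (by norm_num)
  have hm2 : c1 * (x1 ^ 2)⁻¹ + c2 * (x2 ^ 2)⁻¹ + c3 * (x3 ^ 2)⁻¹ = 0 := by
    have := hrel (-2) (by norm_num)
    simpa [zpow_neg, sq, zpow_two, mul_inv] using this
  have Em1 : c1 * (x2 * x3) + c2 * (x1 * x3) + c3 * (x1 * x2) = 0 := by
    field_simp at hm1
    linear_combination hm1
  have Em2 : c1 * (x2 ^ 2 * x3 ^ 2) + c2 * (x1 ^ 2 * x3 ^ 2) + c3 * (x1 ^ 2 * x2 ^ 2) = 0 := by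
    field_simp at hm2
    linear_combination hm2
  have hA : x1 + x2 + x3 = 0 := by
    have key : (x1 + x2 + x3) * ((c1 + c2 + c3) * (x1 * (x2 * x3))) = 0 := by
      linear_combination (x1 * x2 * x3) * h1 + (x1*x2 + x2*x3 + x3*x1) * Em1 - Em2
    rcases mul_eq_zero.mp key with h | h
    · exact h
    · exact absurd h (mul_ne_zero hc (mul_ne_zero hx1 (mul_ne_zero hx2 hx3)))
  have hB : x1 * x2 + x2 * x3 + x3 * x1 = 0 := by
    have key : (x1 * x2 + x2 * x3 + x3 * x1) * (c1 + c2 + c3) = 0 := by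
      linear_combination (x1 + x2 + x3) * h1 - h2 + Em1
    rcases mul_eq_zero.mp key with h | h
    · exact h
    · exact absurd h hc
  exact ⟨by linear_combination x1 * hA - hB, by linear_combination x2 * hA - hB,
    by linear_combination x3 * hA - hB⟩
end

section
/- Suppose p and q are nonnegative integers with q > 0, and p + 1 is a rational root of the quadratic X² − (q+1)X + q(q+1)/2 = 0. Then q = 1 and p = 0. -/
/-- If p ≥ 0, q > 0 are integers and p + 1 is a root of
X² − (q+1)X + q(q+1)/2 = 0, then q = 1 and p = 0. -/
theorem stmt_8 (p q : ℤ) (hp : 0 ≤ p) (hq : 0 < q)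
    (h : ((p : ℚ) + 1) ^ 2 - ((q : ℚ) + 1) * ((p : ℚ) + 1) + (q : ℚ) * ((q : ℚ) + 1) / 2 = 0) :
    q = 1 ∧ p = 0 := by
  have key : 2 * (p + 1) ^ 2 - 2 * (q + 1) * (p + 1) + q * (q + 1) = 0 := by
    have : (2 : ℚ) * ((p : ℚ) + 1) ^ 2 - 2 * ((q : ℚ) + 1) * ((p : ℚ) + 1)
        + (q : ℚ) * ((q : ℚ) + 1) = 0 := by linarith
    exact_mod_cast this
  have hq1 : q = 1 := by nlinarith [sq_nonneg (2 * (p + 1) - (q + 1))]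
  subst hq1
  refine ⟨rfl, ?_⟩
  nlinarith [sq_nonneg p]
end

section
/- Suppose p and q are nonnegative integers with q > 0, and p + 1 is a rational root of the quadratic X² − (4q/3 + 1)X + (2/3)q(q+1) = 0. Then q = 1 and p = 0. -/
/-- If p ≥ 0, q > 0 are integers and p + 1 is a root of
X² − (4q/3 + 1)X + (2/3)q(q+1) = 0, then q = 1 and p = 0. -/
theorem stmt_9 (p q : ℤ) (hp : 0 ≤ p) (hq : 0 < q)
    (h : ((p : ℚ) + 1) ^ 2 - (4 * (q : ℚ) / 3 + 1) * ((p : ℚ) + 1)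
        + 2 / 3 * (q : ℚ) * ((q : ℚ) + 1) = 0) :
    q = 1 ∧ p = 0 := by
  have hz : 3 * (p + 1) ^ 2 - (4 * q + 3) * (p + 1) + 2 * q * (q + 1) = 0 := by
    have h3 : ((3 * (p + 1) ^ 2 - (4 * q + 3) * (p + 1) + 2 * q * (q + 1) : ℤ) : ℚ) = 0 := by
      push_cast
      linear_combination 3 * h
    exact_mod_cast h3
  have hsq : (6 * (p + 1) - (4 * q + 3)) ^ 2 = 9 - 8 * q ^ 2 := by ring_nf; linarith [hz]; 
  have hq1 : q = 1 := by nlinarith [sq_nonneg (6 * (p + 1) - (4 * q + 3))]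
  subst hq1
  refine ⟨rfl, ?_⟩
  nlinarith [hz]
end

section
/- Let y1, y2 be roots of unity of odd order with y1 ∉ {y2, y2^{-1}}, and suppose (y1 + y1^{-1})/(y2 + y2^{-1}) is a rational number. Then y1 + y1^{-1} and y2 + y2^{-1} are rational, i.e., the orders of y1 and y2 each divide 3 or equal 1. -/
open Polynomial


lemma aux_dickson_deg : ∀ n : ℕ, (dickson 1 (1:ℤ) n).natDegree = n ∧ (n ≠ 0 → (dickson 1 (1:ℤ) n).Monic)
  | 0 => by
    constructor
    · simp [dickson_zero]
      norm_num
    · intro h; exact absurd rfl h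
  | 1 => by simp [dickson_one, monic_X]
  | (n+2) => by
    obtain ⟨hd1, hm1⟩ := aux_dickson_deg (n+1)
    obtain ⟨hd0, _⟩ := aux_dickson_deg n
    have hm1' := hm1 (Nat.succ_ne_zero n)
    have hmonX : (X * dickson 1 (1:ℤ) (n+1)).Monic := monic_X.mul hm1'
    have hdX : (X * dickson 1 (1:ℤ) (n+1)).natDegree = n + 2 := by
      rw [natDegree_mul X_ne_zero hm1'.ne_zero, natDegree_X, hd1]; omega
    have hdeglt : (-(C (1:ℤ) * dickson 1 1 n)).degree < (X * dickson 1 (1:ℤ) (n+1)).degree := by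
      rw [degree_neg, C_1, one_mul]
      rw [degree_eq_natDegree hmonX.ne_zero, hdX]
      calc (dickson 1 (1:ℤ) n).degree ≤ (n : WithBot ℕ) := degree_le_natDegree.trans (by rw [hd0])
        _ < ((n+2 : ℕ) : WithBot ℕ) := by exact_mod_cast Nat.lt_add_of_pos_right (by norm_num)
    have key : dickson 1 (1:ℤ) (n+2) = X * dickson 1 1 (n+1) + -(C 1 * dickson 1 1 n) := by
      rw [dickson_add_two]; ring
    constructor
    · rw [key, natDegree_add_eq_left_of_degree_lt hdeglt, hdX]
    · intro _
      rw [key]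
      exact hmonX.add_of_left hdeglt

lemma aux_dickson_deg' (n : ℕ) : (dickson 1 (1:ℤ) n).natDegree = n ∧ (n ≠ 0 → (dickson 1 (1:ℤ) n).Monic) := aux_dickson_deg n

noncomputable def dpoly (m : ℕ) : ℤ[X] := dickson 1 1 m - C 2

lemma dpoly_monic {m : ℕ} (hm : m ≠ 0) : (dpoly m).Monic := by
  obtain ⟨hd, hmon⟩ := aux_dickson_deg' m
  have h := hmon hm
  rw [dpoly, sub_eq_add_neg]
  refine h.add_of_left ?_
  rw [degree_eq_natDegree h.ne_zero, hd, degree_neg]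
  calc (C (2:ℤ)).degree ≤ 0 := degree_C_le
    _ < (m : WithBot ℕ) := by exact_mod_cast Nat.pos_of_ne_zero hm

lemma dpoly_root {m : ℕ} (hm : m ≠ 0) {z : ℂ} (hz : z ≠ 0) (h : z ^ m = 1) :
    aeval (z + z⁻¹) (dpoly m) = 0 := by
  rw [dpoly, map_sub, aeval_C, aeval_def, ← eval_map, Polynomial.map_dickson]
  rw [map_one, map_ofNat, dickson_one_one_eval_add_inv z z⁻¹ (mul_inv_cancel₀ hz)]
  rw [h, inv_pow, h]
  norm_num

lemma dpoly_root_norm {m : ℕ} (hm : m ≠ 0) {ρ : ℂ}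
    (h : aeval ρ (dpoly m) = 0) : ‖ρ‖₊ ≤ 2 := by
  have h2 : eval ρ (dickson 1 (1:ℂ) m) = 2 := by
    rw [dpoly, map_sub, aeval_C, aeval_def, ← eval_map, Polynomial.map_dickson, map_one,
      map_ofNat] at h
    linear_combination h
  -- find z with z^2 - ρ z + 1 = 0
  obtain ⟨z, hzr⟩ : ∃ z : ℂ, IsRoot (C 1 * X ^ 2 + C (-ρ) * X + C 1) z := by
    apply Complex.exists_root
    rw [degree_quadratic one_ne_zero]
    norm_num
  have hz : z ^ 2 - ρ * z + 1 = 0 := by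
    have := hzr
    simp [IsRoot, eval_add, eval_mul, eval_pow] at this
    linear_combination this
  have hz0 : z ≠ 0 := by
    intro h0; rw [h0] at hz; norm_num at hz
  have hρ : ρ = z + z⁻¹ := by
    field_simp
    linear_combination -hz
  have hzm : z ^ m = 1 := by
    rw [hρ, dickson_one_one_eval_add_inv z z⁻¹ (mul_inv_cancel₀ hz0)] at h2
    have hzm0 : z ^ m ≠ 0 := pow_ne_zero _ hz0
    have : (z ^ m - 1) ^ 2 = 0 := by
      have h3 : z ^ m + (z ^ m)⁻¹ = 2 := by rw [← inv_pow]; exact h2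
      field_simp at h3
      linear_combination h3
    have := pow_eq_zero_iff (n := 2) (by norm_num) |>.mp this
    exact sub_eq_zero.mp this
  have hnz : ‖z‖ = 1 := Complex.norm_eq_one_of_pow_eq_one hzm hm
  have : ‖ρ‖ ≤ 2 := by
    rw [hρ]
    calc ‖z + z⁻¹‖ ≤ ‖z‖ + ‖z⁻¹‖ := norm_add_le _ _
      _ = 2 := by rw [norm_inv, hnz]; norm_num
  exact_mod_cast this


-- if a + a⁻¹ = c + c⁻¹ then a = c or a = c⁻¹
lemma aux_eq {a c : ℂ} (ha : a ≠ 0) (hc : c ≠ 0) (h : a + a⁻¹ = c + c⁻¹) :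
    a = c ∨ a = c⁻¹ := by
  have h' : (a + a⁻¹) * (a * c) = (c + c⁻¹) * (a * c) := by rw [h]
  have hainv : a * a⁻¹ = 1 := mul_inv_cancel₀ ha
  have hcinv : c * c⁻¹ = 1 := mul_inv_cancel₀ hc
  have key : (a - c) * (a * c - 1) = 0 := by
    linear_combination h' - c * hainv + a * hcinv
  rcases mul_eq_zero.mp key with h' | h'
  · left; exact sub_eq_zero.mp h'
  · right
    have : a * c = 1 := by linear_combination h'
    exact eq_inv_of_mul_eq_one_left this
-- y + y⁻¹ ≠ 0 for odd order
lemma aux_ne_zero {a : ℂ} (ha : Odd (orderOf a)) : a + a⁻¹ ≠ 0 := by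
  intro h
  have hm0 : orderOf a ≠ 0 := ha.pos.ne'
  have ha0 : a ≠ 0 := by
    intro h0
    have := pow_orderOf_eq_one a
    rw [h0] at this hm0
    rw [zero_pow hm0] at this
    exact zero_ne_one this
  have h2 : a ^ 2 = -1 := by
    field_simp at h
    linear_combination h
  have h4 : a ^ 4 = 1 := by
    have : a ^ 4 = (a ^ 2) ^ 2 := by ring
    rw [this, h2]; norm_num
  have hdvd : orderOf a ∣ 4 := orderOf_dvd_of_pow_eq_one h4
  have hcop : Nat.Coprime (orderOf a) 2 := by
    exact ha.coprime_two_right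
  have : orderOf a ∣ 1 := by
    have h22 : (4:ℕ) = 2 * 2 := by norm_num
    rw [h22] at hdvd
    have h1 := hcop.dvd_of_dvd_mul_left hdvd
    have h2 : orderOf a ∣ 2 * 1 := by simpa using h1
    have := hcop.dvd_of_dvd_mul_left h2
    simpa using this
  have : a = 1 := orderOf_eq_one_iff.mp (Nat.dvd_one.mp this)
  rw [this] at h
  norm_num at h


lemma aux_minpoly_scale {α β : ℂ} (r : ℚ) (hr : r ≠ 0) (hαβ : α = (r:ℂ) * β)
    (hα : IsIntegral ℚ α) (hβ : IsIntegral ℚ β) :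
    minpoly ℚ α = (minpoly ℚ β).scaleRoots r := by
  have hQm : (minpoly ℚ β).Monic := minpoly.monic hβ
  have hPm : (minpoly ℚ α).Monic := minpoly.monic hα
  have hSm : ((minpoly ℚ β).scaleRoots r).Monic := (monic_scaleRoots_iff r).mpr hQm
  have hTm : ((minpoly ℚ α).scaleRoots r⁻¹).Monic := (monic_scaleRoots_iff r⁻¹).mpr hPm
  have hS0 : aeval α ((minpoly ℚ β).scaleRoots r) = 0 := by
    have := scaleRoots_aeval_eq_zero (r := r) (minpoly.aeval ℚ β)
    rw [show ((algebraMap ℚ ℂ) r) = (r:ℂ) from rfl, ← hαβ] at this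
    exact this
  have hT0 : aeval β ((minpoly ℚ α).scaleRoots r⁻¹) = 0 := by
    have hβα : β = (algebraMap ℚ ℂ) r⁻¹ * α := by
      rw [show ((algebraMap ℚ ℂ) r⁻¹) = (r:ℂ)⁻¹ by push_cast; rfl, hαβ]
      rw [← mul_assoc, inv_mul_cancel₀ (by exact_mod_cast hr), one_mul]
    have := scaleRoots_aeval_eq_zero (r := r⁻¹) (minpoly.aeval ℚ α)
    rwa [← hβα] at this
  have hPS : minpoly ℚ α ∣ (minpoly ℚ β).scaleRoots r := minpoly.dvd ℚ α hS0
  have hQT : minpoly ℚ β ∣ (minpoly ℚ α).scaleRoots r⁻¹ := minpoly.dvd ℚ β hT0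
  have hdeg : ((minpoly ℚ β).scaleRoots r).natDegree ≤ (minpoly ℚ α).natDegree := by
    rw [natDegree_scaleRoots]
    calc (minpoly ℚ β).natDegree ≤ ((minpoly ℚ α).scaleRoots r⁻¹).natDegree :=
          natDegree_le_of_dvd hQT hTm.ne_zero
      _ = (minpoly ℚ α).natDegree := natDegree_scaleRoots _ _
  exact eq_of_dvd_of_natDegree_le_of_leadingCoeff hPS hdeg (by rw [hPm.leadingCoeff, hSm.leadingCoeff])


lemma coeff0_bound (P : ℚ[X]) (hm : P.Monic)
    (hb : ∀ ρ ∈ (P.map (algebraMap ℚ ℂ)).roots, ‖ρ‖₊ ≤ 2) :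
    ‖(P.map (algebraMap ℚ ℂ)).coeff 0‖₊ ≤ 2 ^ P.natDegree := by
  set Pc := P.map (algebraMap ℚ ℂ) with hPc
  have hmc : Pc.Monic := hm.map _
  have hsplit : Pc.Splits := IsAlgClosed.splits _
  have hcard : Multiset.card Pc.roots = P.natDegree := by
    have := (splits_iff_card_roots).mp hsplit
    rw [this, hPc, natDegree_map]
  have h0 : ‖Pc.coeff 0‖₊ = (Pc.roots.map (fun z => ‖z‖₊)).prod := by
    rw [hsplit.coeff_zero_eq_prod_roots_of_monic hmc]
    rw [nnnorm_mul, nnnorm_pow, nnnorm_neg, nnnorm_one, one_pow, one_mul]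
    exact (Pc.roots.prod_hom nnnormHom).symm    -- guess
  rw [h0, ← hcard]
  have := Multiset.prod_le_pow_card (Pc.roots.map (fun z => ‖z‖₊)) 2 (by
    intro x hx
    obtain ⟨ρ, hρ, rfl⟩ := Multiset.mem_map.mp hx
    exact hb ρ hρ)
  simpa using this

lemma coeff0_lower (P : ℚ[X]) (hm : P.Monic) (α : ℂ)
    (hα : α ∈ (P.map (algebraMap ℚ ℂ)).roots)
    (hb : ∀ ρ ∈ (P.map (algebraMap ℚ ℂ)).roots, ‖ρ‖₊ ≤ 2)
    (hge : (2:NNReal) ^ P.natDegree ≤ ‖(P.map (algebraMap ℚ ℂ)).coeff 0‖₊) :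
    2 ≤ ‖α‖₊ := by
  set Pc := P.map (algebraMap ℚ ℂ) with hPc
  have hmc : Pc.Monic := hm.map _
  have hsplit : Pc.Splits := IsAlgClosed.splits _
  have hcard : Multiset.card Pc.roots = P.natDegree := by
    have := (splits_iff_card_roots).mp hsplit
    rw [this, hPc, natDegree_map]
  have h0 : ‖Pc.coeff 0‖₊ = (Pc.roots.map (fun z => ‖z‖₊)).prod := by
    rw [hsplit.coeff_zero_eq_prod_roots_of_monic hmc]
    rw [nnnorm_mul, nnnorm_pow, nnnorm_neg, nnnorm_one, one_pow, one_mul]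
    exact (Pc.roots.prod_hom nnnormHom).symm
  obtain ⟨t, ht⟩ := Multiset.exists_cons_of_mem hα
  have htcard : Multiset.card t + 1 = P.natDegree := by
    rw [← hcard, ht, Multiset.card_cons]
  have htprod : (t.map (fun z => ‖z‖₊)).prod ≤ 2 ^ Multiset.card t := by
    have := Multiset.prod_le_pow_card (t.map (fun z => ‖z‖₊)) 2 (by
      intro x hx
      obtain ⟨ρ, hρ, rfl⟩ := Multiset.mem_map.mp hx
      exact hb ρ (by rw [ht]; exact Multiset.mem_cons_of_mem hρ))
    simpa using this
  have hprodeq : (Pc.roots.map (fun z => ‖z‖₊)).prod = ‖α‖₊ * (t.map (fun z => ‖z‖₊)).prod := by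
    rw [ht, Multiset.map_cons, Multiset.prod_cons]
  have hchain : (2:NNReal) ^ P.natDegree ≤ ‖α‖₊ * 2 ^ Multiset.card t := by
    calc (2:NNReal) ^ P.natDegree ≤ ‖Pc.coeff 0‖₊ := hge
      _ = ‖α‖₊ * (t.map (fun z => ‖z‖₊)).prod := by rw [h0, hprodeq]
      _ ≤ ‖α‖₊ * 2 ^ Multiset.card t := mul_le_mul_right htprod _
  rw [← htcard, pow_succ, mul_comm] at hchain
  exact le_of_mul_le_mul_right (by rwa [mul_comm] at hchain) (by positivity)


section Aux

lemma aux_neg {a b : ℂ} {m n : ℕ} (hm : Odd m) (hn : Odd n)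
    (ha : a ^ m = 1) (hb : b ^ n = 1) (h : a = -b) : False := by
  rw [h, hm.neg_pow] at ha
  have hbm : b ^ m = -1 := by linear_combination -ha
  have h1 : b ^ (n * m) = 1 := by rw [pow_mul, hb, one_pow]
  have h2 : b ^ (n * m) = -1 := by rw [mul_comm, pow_mul, hbm, hn.neg_one_pow]
  rw [h1] at h2
  norm_num at h2

lemma aux_order3 {y : ℂ} (h : y ^ 2 + y + 1 = 0) : orderOf y = 3 := by
  have h3 : y ^ 3 = 1 := by linear_combination (y - 1) * h
  have hy1 : y ≠ 1 := by intro h0; rw [h0] at h; norm_num at h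
  exact orderOf_eq_prime h3 hy1

lemma aux_bad {y : ℂ} {m : ℕ} (hodd : Odd m) (hy : y ^ m = 1)
    (h : y ^ 2 - y + 1 = 0) : False := by
  have h3 : (-y) ^ 3 = 1 := by linear_combination (-(y + 1)) * h
  exact aux_neg hodd (by decide) hy h3 (neg_neg y).symm

lemma aux_sum_inv {y : ℂ} {c : ℂ} (hy : y ≠ 0) (hc : c ≠ 0)
    (h : y + y⁻¹ = c) : y ^ 2 - c * y + 1 = 0 := by
  have h' : (y + y⁻¹) * y = c * y := by rw [h]
  have : y * y⁻¹ = 1 := mul_inv_cancel₀ hy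
  linear_combination h' - this

lemma aux_eq_one {y : ℂ} {m : ℕ} (hodd : Odd m) (hm : m ≠ 0) (hyp : y ^ m = 1)
    (h : (2:ℝ) ≤ ‖y + y⁻¹‖) : y = 1 := by
  have hnorm : ‖y‖ = 1 := Complex.norm_eq_one_of_pow_eq_one hyp hm
  have hconj : y⁻¹ = (starRingEnd ℂ) y := Complex.inv_eq_conj hnorm
  have hre : y + y⁻¹ = ((2 * y.re : ℝ) : ℂ) := by rw [hconj]; exact Complex.add_conj y
  rw [hre, Complex.norm_real, Real.norm_eq_abs, abs_mul, abs_two] at h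
  have hre1 : 1 ≤ |y.re| := by linarith
  have hsq : y.re ^ 2 + y.im ^ 2 = 1 := by
    have h2 : ‖y‖ ^ 2 = 1 := by rw [hnorm]; norm_num
    rw [Complex.sq_norm, Complex.normSq_apply] at h2
    linear_combination h2
  have him : y.im = 0 := by nlinarith [sq_abs y.re, sq_nonneg y.im]
  have hcase : y.re = 1 ∨ y.re = -1 := by
    have hz : (y.re - 1) * (y.re + 1) = 0 := by nlinarith [sq_abs y.re]
    rcases mul_eq_zero.mp hz with h' | h'
    · left; linarith
    · right; linarith
  rcases hcase with h' | h'
  · exact Complex.ext (by simp [h']) (by simp [him])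
  · exfalso
    have hy : y = -1 := Complex.ext (by simp [h']) (by simp [him])
    exact aux_neg hodd odd_one hyp (one_pow 1) (by rw [hy])

end Aux

/-- If y1, y2 are roots of unity of odd order with y1 ∉ {y2, y2⁻¹}, and
(y1 + y1⁻¹)/(y2 + y2⁻¹) is rational, then y1 + y1⁻¹ and y2 + y2⁻¹ are rational,
i.e. the orders of y1 and y2 divide 3. -/
theorem stmt_14 (y1 y2 : ℂ)
    (h1 : Odd (orderOf y1)) (h2 : Odd (orderOf y2))
    (hne : y1 ≠ y2 ∧ y1 ≠ y2⁻¹)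
    (hrat : ∃ r : ℚ, (y1 + y1⁻¹) / (y2 + y2⁻¹) = (r : ℂ)) :
    (∃ r : ℚ, y1 + y1⁻¹ = (r : ℂ)) ∧ (∃ r : ℚ, y2 + y2⁻¹ = (r : ℂ)) ∧
    orderOf y1 ∣ 3 ∧ orderOf y2 ∣ 3 := by
  obtain ⟨hne1, hne2⟩ := hne
  obtain ⟨r, hr⟩ := hrat
  have hm1 : orderOf y1 ≠ 0 := h1.pos.ne'
  have hm2 : orderOf y2 ≠ 0 := h2.pos.ne'
  have hy1p : y1 ^ orderOf y1 = 1 := pow_orderOf_eq_one y1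
  have hy2p : y2 ^ orderOf y2 = 1 := pow_orderOf_eq_one y2
  have hy10 : y1 ≠ 0 := by rintro rfl; rw [zero_pow hm1] at hy1p; exact zero_ne_one hy1p
  have hy20 : y2 ≠ 0 := by rintro rfl; rw [zero_pow hm2] at hy2p; exact zero_ne_one hy2p
  have hα0 : y1 + y1⁻¹ ≠ 0 := aux_ne_zero h1
  have hβ0 : y2 + y2⁻¹ ≠ 0 := aux_ne_zero h2
  have hαβ : y1 + y1⁻¹ = (r : ℂ) * (y2 + y2⁻¹) := by
    rw [div_eq_iff hβ0] at hr; exact hr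
  have hr0 : r ≠ 0 := by
    rintro rfl; push_cast at hαβ; rw [zero_mul] at hαβ; exact hα0 hαβ
  -- integrality
  have hαZ : IsIntegral ℤ (y1 + y1⁻¹) := ⟨dpoly (orderOf y1), dpoly_monic hm1, by
    rw [← aeval_def]; exact dpoly_root hm1 hy10 hy1p⟩
  have hβZ : IsIntegral ℤ (y2 + y2⁻¹) := ⟨dpoly (orderOf y2), dpoly_monic hm2, by
    rw [← aeval_def]; exact dpoly_root hm2 hy20 hy2p⟩
  have hαQ : IsIntegral ℚ (y1 + y1⁻¹) := hαZ.tower_top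
  have hβQ : IsIntegral ℚ (y2 + y2⁻¹) := hβZ.tower_top
  have hbound : ∀ (y : ℂ), y ≠ 0 → ∀ _hm : orderOf y ≠ 0, y ^ orderOf y = 1 →
      ∀ ρ ∈ ((minpoly ℚ (y + y⁻¹)).map (algebraMap ℚ ℂ)).roots, ‖ρ‖₊ ≤ 2 := by
    intro y hy0 hm hyp ρ hρ
    have hdvd : minpoly ℚ (y + y⁻¹) ∣ (dpoly (orderOf y)).map (algebraMap ℤ ℚ) :=
      minpoly.dvd ℚ _ (by rw [aeval_map_algebraMap]; exact dpoly_root hm hy0 hyp)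
    have hdvd2 : (minpoly ℚ (y + y⁻¹)).map (algebraMap ℚ ℂ) ∣
        ((dpoly (orderOf y)).map (algebraMap ℤ ℚ)).map (algebraMap ℚ ℂ) :=
      Polynomial.map_dvd _ hdvd
    rw [map_map, ← IsScalarTower.algebraMap_eq] at hdvd2
    have hρ0 : eval ρ ((minpoly ℚ (y + y⁻¹)).map (algebraMap ℚ ℂ)) = 0 :=
      (mem_roots'.mp hρ).2
    have hev : aeval ρ (dpoly (orderOf y)) = 0 := by
      rw [aeval_def, ← eval_map]
      exact eval_eq_zero_of_dvd_of_eval_eq_zero hdvd2 hρ0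
    exact dpoly_root_norm hm hev
  have hbα := hbound y1 hy10 hm1 hy1p
  have hbβ := hbound y2 hy20 hm2 hy2p
  have hkey := aux_minpoly_scale r hr0 hαβ hαQ hβQ
  set d := (minpoly ℚ (y2 + y2⁻¹)).natDegree with hdd
  have hd1 : 0 < d := minpoly.natDegree_pos hβQ
  have hdP : (minpoly ℚ (y1 + y1⁻¹)).natDegree = d := by rw [hkey, natDegree_scaleRoots]
  have hc : (minpoly ℚ (y1 + y1⁻¹)).coeff 0 = (minpoly ℚ (y2 + y2⁻¹)).coeff 0 * r ^ d := by
    rw [hkey, coeff_scaleRoots, tsub_zero]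
  have hAQ : minpoly ℚ (y1 + y1⁻¹) = (minpoly ℤ (y1 + y1⁻¹)).map (algebraMap ℤ ℚ) :=
    minpoly.isIntegrallyClosed_eq_field_fractions ℚ ℂ hαZ
  have hBQ : minpoly ℚ (y2 + y2⁻¹) = (minpoly ℤ (y2 + y2⁻¹)).map (algebraMap ℤ ℚ) :=
    minpoly.isIntegrallyClosed_eq_field_fractions ℚ ℂ hβZ
  set A := (minpoly ℤ (y1 + y1⁻¹)).coeff 0 with hAdef
  set B := (minpoly ℤ (y2 + y2⁻¹)).coeff 0 with hBdef
  have hA : (minpoly ℚ (y1 + y1⁻¹)).coeff 0 = (A : ℚ) := by rw [hAQ, coeff_map]; simp [hAdef]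
  have hB : (minpoly ℚ (y2 + y2⁻¹)).coeff 0 = (B : ℚ) := by rw [hBQ, coeff_map]; simp [hBdef]
  have hA0 : A ≠ 0 := by
    intro h0
    exact minpoly.coeff_zero_ne_zero hαQ hα0 (by rw [hA, h0, Int.cast_zero])
  have hB0 : B ≠ 0 := by
    intro h0
    exact minpoly.coeff_zero_ne_zero hβQ hβ0 (by rw [hB, h0, Int.cast_zero])
  have hnn : ∀ (C0 : ℤ) (y : ℂ), (minpoly ℚ (y + y⁻¹)).coeff 0 = (C0:ℚ) →
      ‖((minpoly ℚ (y + y⁻¹)).map (algebraMap ℚ ℂ)).coeff 0‖₊ = (C0.natAbs : NNReal) := by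
    intro C0 y hC
    rw [coeff_map, hC]
    apply NNReal.coe_injective
    rw [coe_nnnorm, show ((algebraMap ℚ ℂ) ((C0:ℚ))) = (C0:ℂ) from by push_cast; rfl,
      Complex.norm_intCast]
    push_cast [Nat.cast_natAbs]
    rfl
  have hAle : A.natAbs ≤ 2 ^ d := by
    have hb1 := coeff0_bound _ (minpoly.monic hαQ) hbα
    rw [hnn A y1 hA, hdP] at hb1
    exact_mod_cast hb1
  have hBle : B.natAbs ≤ 2 ^ d := by
    have hb1 := coeff0_bound _ (minpoly.monic hβQ) hbβ
    rw [hnn B y2 hB] at hb1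
    exact_mod_cast hb1
  have hpq : (r:ℚ) * (r.den:ℚ) = (r.num:ℚ) := by
    have hden0 : (r.den:ℚ) ≠ 0 := Nat.cast_ne_zero.mpr r.den_nz
    exact (eq_div_iff hden0).mp (Rat.num_div_den r).symm
  have hZQ : (A:ℚ) * ((r.den:ℤ):ℚ) ^ d = (B:ℚ) * ((r.num):ℚ) ^ d := by
    rw [← hA, ← hB, hc, mul_assoc, ← mul_pow]
    push_cast
    rw [hpq]
  have hZ : A * (r.den:ℤ) ^ d = B * r.num ^ d := by exact_mod_cast hZQ
  have hcop : IsCoprime (r.num) ((r.den:ℤ)) := by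
    rw [Int.isCoprime_iff_gcd_eq_one]
    simpa [Int.gcd] using r.reduced
  have hnd : r.num ^ d ∣ A := by
    refine (hcop.pow (m := d) (n := d)).dvd_of_dvd_mul_right ⟨B, ?_⟩
    linear_combination hZ
  have hqd : (r.den:ℤ) ^ d ∣ B := by
    refine (hcop.symm.pow (m := d) (n := d)).dvd_of_dvd_mul_right ⟨A, ?_⟩
    linear_combination -hZ
  have hnum2 : r.num.natAbs ≤ 2 := by
    have hdv : r.num.natAbs ^ d ∣ A.natAbs := by
      rw [← Int.natAbs_pow]; exact Int.natAbs_dvd_natAbs.mpr hnd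
    have hle := (Nat.le_of_dvd (Int.natAbs_pos.mpr hA0) hdv).trans hAle
    exact (Nat.pow_le_pow_iff_left hd1.ne').mp hle
  have hden2 : r.den ≤ 2 := by
    have hdv : r.den ^ d ∣ B.natAbs := by
      have := Int.natAbs_dvd_natAbs.mpr hqd
      rwa [Int.natAbs_pow, Int.natAbs_natCast] at this
    have hle := (Nat.le_of_dvd (Int.natAbs_pos.mpr hB0) hdv).trans hBle
    exact (Nat.pow_le_pow_iff_left hd1.ne').mp hle
  have hnum0 : r.num ≠ 0 := Rat.num_ne_zero.mpr hr0
  have hdpos : 0 < r.den := r.pos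
  have hcase_num : r.num = 1 ∨ r.num = -1 ∨ r.num = 2 ∨ r.num = -2 := by omega
  have hcase_den : r.den = 1 ∨ r.den = 2 := by omega
  have hmem1 : (y1 + y1⁻¹) ∈ ((minpoly ℚ (y1 + y1⁻¹)).map (algebraMap ℚ ℂ)).roots := by
    rw [mem_roots']
    exact ⟨((minpoly.monic hαQ).map _).ne_zero,
      by rw [IsRoot, eval_map, ← aeval_def, minpoly.aeval]⟩
  have hmem2 : (y2 + y2⁻¹) ∈ ((minpoly ℚ (y2 + y2⁻¹)).map (algebraMap ℚ ℂ)).roots := by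
    rw [mem_roots']
    exact ⟨((minpoly.monic hβQ).map _).ne_zero,
      by rw [IsRoot, eval_map, ← aeval_def, minpoly.aeval]⟩
  rcases hcase_den with hden | hden
  · rcases hcase_num with hnum | hnum | hnum | hnum
    · -- r = 1
      have hrv : r = 1 := by
        have h' := hpq; rw [hnum, hden] at h'; push_cast at h'; linarith
      rw [hrv] at hαβ; push_cast at hαβ; rw [one_mul] at hαβ
      rcases aux_eq hy10 hy20 hαβ with h | h
      · exact absurd h hne1
      · exact absurd h hne2
    · -- r = -1
      have hrv : r = -1 := by
        have h' := hpq; rw [hnum, hden] at h'; push_cast at h'; linarith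
      rw [hrv] at hαβ; push_cast at hαβ
      have hαβ' : y1 + y1⁻¹ = (-y2) + (-y2)⁻¹ := by
        rw [inv_neg]; linear_combination hαβ
      rcases aux_eq hy10 (neg_ne_zero.mpr hy20) hαβ' with h | h
      · exact (aux_neg h1 h2 hy1p hy2p h).elim
      · rw [inv_neg] at h
        exact (aux_neg h1 h2 hy1p (by rw [inv_pow, hy2p, inv_one]) h).elim
    · -- r = 2
      have hnabs : r.num.natAbs = 2 := by rw [hnum]; rfl
      have hZ' : A = B * r.num ^ d := by
        rw [hden] at hZ; push_cast at hZ; simpa using hZ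
      have hAge : 2 ^ d ≤ A.natAbs := by
        rw [hZ', Int.natAbs_mul, Int.natAbs_pow, hnabs]
        calc 2 ^ d = 1 * 2 ^ d := (one_mul _).symm
          _ ≤ B.natAbs * 2 ^ d := Nat.mul_le_mul_right _ (Int.natAbs_pos.mpr hB0)
      have hge : (2:NNReal) ^ (minpoly ℚ (y1 + y1⁻¹)).natDegree ≤
          ‖((minpoly ℚ (y1 + y1⁻¹)).map (algebraMap ℚ ℂ)).coeff 0‖₊ := by
        rw [hnn A y1 hA, hdP]; exact_mod_cast hAge
      have h2α := coeff0_lower _ (minpoly.monic hαQ) _ hmem1 hbα hge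
      have hy1eq : y1 = 1 := aux_eq_one h1 hm1 hy1p (by exact_mod_cast h2α)
      have hrv : r = r.num := by
        have h' := hpq; rw [hden] at h'; push_cast at h'; linarith
      rw [hy1eq, hrv, hnum, inv_one] at hαβ
      push_cast at hαβ
      have hβval : y2 + y2⁻¹ = 1 :=
        mul_left_cancel₀ (by norm_num : (2:ℂ) ≠ 0) (by rw [mul_one]; linear_combination -hαβ)
      exact (aux_bad h2 hy2p (by
        have hq := aux_sum_inv hy20 one_ne_zero hβval
        linear_combination hq)).elim
    · -- r = -2
      have hnabs : r.num.natAbs = 2 := by rw [hnum]; rfl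
      have hZ' : A = B * r.num ^ d := by
        rw [hden] at hZ; push_cast at hZ; simpa using hZ
      have hAge : 2 ^ d ≤ A.natAbs := by
        rw [hZ', Int.natAbs_mul, Int.natAbs_pow, hnabs]
        calc 2 ^ d = 1 * 2 ^ d := (one_mul _).symm
          _ ≤ B.natAbs * 2 ^ d := Nat.mul_le_mul_right _ (Int.natAbs_pos.mpr hB0)
      have hge : (2:NNReal) ^ (minpoly ℚ (y1 + y1⁻¹)).natDegree ≤
          ‖((minpoly ℚ (y1 + y1⁻¹)).map (algebraMap ℚ ℂ)).coeff 0‖₊ := by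
        rw [hnn A y1 hA, hdP]; exact_mod_cast hAge
      have h2α := coeff0_lower _ (minpoly.monic hαQ) _ hmem1 hbα hge
      have hy1eq : y1 = 1 := aux_eq_one h1 hm1 hy1p (by exact_mod_cast h2α)
      have hrv : r = r.num := by
        have h' := hpq; rw [hden] at h'; push_cast at h'; linarith
      rw [hy1eq, hrv, hnum, inv_one] at hαβ
      push_cast at hαβ
      have hβval : y2 + y2⁻¹ = -1 :=
        mul_left_cancel₀ (by norm_num : (2:ℂ) ≠ 0) (by rw [mul_neg_one]; linear_combination hαβ)
      have horder : orderOf y2 = 3 := aux_order3 (by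
        have hq := aux_sum_inv hy20 (by norm_num : (-1:ℂ) ≠ 0) hβval
        linear_combination hq)
      exact ⟨⟨2, by rw [hy1eq, inv_one]; norm_num⟩, ⟨-1, by rw [hβval]; norm_num⟩,
        by rw [hy1eq, orderOf_one]; exact one_dvd 3, by rw [horder]⟩
  · -- den = 2 : num = ±1
    have hnum' : r.num = 1 ∨ r.num = -1 := by
      rcases hcase_num with h | h | h | h
      · exact Or.inl h
      · exact Or.inr h
      all_goals {
        exfalso
        have hred := r.reduced
        rw [hden, show r.num.natAbs = 2 from by rw [h]; rfl] at hred
        exact absurd hred (by decide)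
      }
    have hrv : (r:ℚ) * 2 = r.num := by
      have h' := hpq; rw [hden] at h'; push_cast at h'; linarith
    have hZ' : B * r.num ^ d = A * 2 ^ d := by
      rw [hden] at hZ; push_cast at hZ; linear_combination -hZ
    have hnabs1 : r.num.natAbs = 1 := by rcases hnum' with h | h <;> rw [h] <;> rfl
    have hBge : 2 ^ d ≤ B.natAbs := by
      have hnat : B.natAbs * 1 = A.natAbs * 2 ^ d := by
        have := congrArg Int.natAbs hZ'
        rwa [Int.natAbs_mul, Int.natAbs_mul, Int.natAbs_pow, Int.natAbs_pow, hnabs1,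
          one_pow, show ((2:ℤ)).natAbs = 2 from rfl] at this
      rw [mul_one] at hnat
      rw [hnat]
      calc 2 ^ d = 1 * 2 ^ d := (one_mul _).symm
        _ ≤ A.natAbs * 2 ^ d := Nat.mul_le_mul_right _ (Int.natAbs_pos.mpr hA0)
    have hge : (2:NNReal) ^ (minpoly ℚ (y2 + y2⁻¹)).natDegree ≤
        ‖((minpoly ℚ (y2 + y2⁻¹)).map (algebraMap ℚ ℂ)).coeff 0‖₊ := by
      rw [hnn B y2 hB]; exact_mod_cast hBge
    have h2β := coeff0_lower _ (minpoly.monic hβQ) _ hmem2 hbβ hge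
    have hy2eq : y2 = 1 := aux_eq_one h2 hm2 hy2p (by exact_mod_cast h2β)
    rw [hy2eq, inv_one] at hαβ
    have hrvc : (r:ℂ) * 2 = (r.num:ℂ) := by exact_mod_cast hrv
    have hαval : y1 + y1⁻¹ = (r.num:ℂ) := by
      rw [hαβ, ← hrvc]; ring
    rcases hnum' with h | h
    · -- α = 1 : contradiction
      rw [h] at hαval; push_cast at hαval
      exact (aux_bad h1 hy1p (by
        have hq := aux_sum_inv hy10 one_ne_zero hαval
        linear_combination hq)).elim
    · -- α = -1
      rw [h] at hαval; push_cast at hαval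
      have horder : orderOf y1 = 3 := aux_order3 (by
        have hq := aux_sum_inv hy10 (by norm_num : (-1:ℂ) ≠ 0) hαval
        linear_combination hq)
      exact ⟨⟨-1, by rw [hαval]; norm_num⟩, ⟨2, by rw [hy2eq, inv_one]; norm_num⟩,
        by rw [horder], by rw [hy2eq, orderOf_one]; exact one_dvd 3⟩
end

section
/- Let K = ℚ(cos(2π/7)) and let x_j = exp(2πi·n_j/7) for (n1, n2, n3) = (1, 3, 5). Set c_j equal to the expression [(x_{j+1} − x_{j+1}^{-1})(x_{j+2}² − x_{j+2}^{-2}) − (x_{j+1}² − x_{j+1}^{-2})(x_{j+2} − x_{j+2}^{-1})] (indices mod 3). Then c1(x1 − x1^{-1}) + c2(x2 − x2^{-1}) + c3(x3 − x3^{-1}) = 0 and c1(x1² − x1^{-2}) + c2(x2² − x2^{-2}) + c3(x3² − x3^{-2}) = 0, and c1, c2, c3 are nonzero real numbers that are linearly independent over ℚ after dividing by c1. -/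
/-- For x1 = ζ7, x2 = ζ7³, x3 = ζ7⁵ (ζ7 = exp(2πi/7)) and the circumferences
c_j = (x_{j+1} − x_{j+1}⁻¹)(x_{j+2}² − x_{j+2}⁻²) − (x_{j+1}² − x_{j+1}⁻²)(x_{j+2} − x_{j+2}⁻¹)
(indices mod 3), the two residue equations hold, and c1, c2, c3 are nonzero real
numbers that are linearly independent over ℚ after dividing by c1. -/
theorem stmt_16 (ζ x1 x2 x3 c1 c2 c3 : ℂ)
    (hζ : ζ = Complex.exp (2 * Real.pi * Complex.I / 7))
    (hx1 : x1 = ζ) (hx2 : x2 = ζ ^ 3) (hx3 : x3 = ζ ^ 5)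
    (hc1 : c1 = (x2 - x2⁻¹) * (x3 ^ 2 - x3⁻¹ ^ 2) - (x2 ^ 2 - x2⁻¹ ^ 2) * (x3 - x3⁻¹))
    (hc2 : c2 = (x3 - x3⁻¹) * (x1 ^ 2 - x1⁻¹ ^ 2) - (x3 ^ 2 - x3⁻¹ ^ 2) * (x1 - x1⁻¹))
    (hc3 : c3 = (x1 - x1⁻¹) * (x2 ^ 2 - x2⁻¹ ^ 2) - (x1 ^ 2 - x1⁻¹ ^ 2) * (x2 - x2⁻¹)) :
    c1 * (x1 - x1⁻¹) + c2 * (x2 - x2⁻¹) + c3 * (x3 - x3⁻¹) = 0 ∧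
    c1 * (x1 ^ 2 - x1⁻¹ ^ 2) + c2 * (x2 ^ 2 - x2⁻¹ ^ 2) + c3 * (x3 ^ 2 - x3⁻¹ ^ 2) = 0 ∧
    (c1 ≠ 0 ∧ c2 ≠ 0 ∧ c3 ≠ 0) ∧
    (c1.im = 0 ∧ c2.im = 0 ∧ c3.im = 0) ∧
    LinearIndependent ℚ ![c1 / c1, c2 / c1, c3 / c1] := by
  have hprim : IsPrimitiveRoot ζ 7 := by
    rw [hζ]; exact Complex.isPrimitiveRoot_exp 7 (by norm_num)
  have h7 : ζ ^ 7 = 1 := hprim.pow_eq_one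
  have hne1 : ζ ≠ 1 := hprim.ne_one (by norm_num)
  have hS : 1 + ζ + ζ^2 + ζ^3 + ζ^4 + ζ^5 + ζ^6 = 0 := by
    have h0 : (ζ - 1) * (1 + ζ + ζ^2 + ζ^3 + ζ^4 + ζ^5 + ζ^6) = 0 := by
      linear_combination h7
    rcases mul_eq_zero.mp h0 with h' | h'
    · exact absurd (sub_eq_zero.mp h') hne1
    · exact h'
  -- inverses of powers
  have hinv1 : ζ⁻¹ = ζ ^ 6 := inv_eq_of_mul_eq_one_left (by linear_combination h7)
  have hinv3 : (ζ ^ 3)⁻¹ = ζ ^ 4 := inv_eq_of_mul_eq_one_left (by linear_combination h7)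
  have hinv5 : (ζ ^ 5)⁻¹ = ζ ^ 2 := inv_eq_of_mul_eq_one_left (by linear_combination h7)
  -- explicit forms of c1, c2, c3 in the basis 1, ζ, …, ζ⁵
  have e1 : c1 = -4 - 2*ζ^2 - 3*ζ^3 - 3*ζ^4 - 2*ζ^5 := by
    rw [hc1, hx2, hx3, hinv3, hinv5]
    linear_combination (-2 + 2*ζ - ζ^3 - ζ^4 + 2*ζ^6 - ζ^7) * h7 + 2 * hS
  have e2 : c2 = 2 + ζ^2 - 2*ζ^3 - 2*ζ^4 + ζ^5 := by
    rw [hc2, hx1, hx3, hinv1, hinv5]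
    linear_combination (2 + ζ^2 - 2*ζ^3 - ζ^4 + ζ^7 + ζ^9 - ζ^10) * h7
  have e3 : c3 = 1 - 3*ζ^2 - ζ^3 - ζ^4 - 3*ζ^5 := by
    rw [hc3, hx1, hx2, hinv1, hinv3]
    linear_combination (2 + ζ - 2*ζ^2 - ζ^5 + ζ^7 + ζ^8 - ζ^9) * h7 + hS
  -- linear independence of 1, ζ, …, ζ⁵ over ℚ
  have hmin : minpoly ℚ ζ = Polynomial.cyclotomic 7 ℚ :=
    (Polynomial.cyclotomic_eq_minpoly_rat hprim (by norm_num)).symm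
  have hdeg : (minpoly ℚ ζ).natDegree = 6 := by
    rw [hmin, Polynomial.natDegree_cyclotomic]; decide
  have hLI := linearIndependent_pow (K := ℚ) (S := ℂ) ζ
  rw [hdeg] at hLI
  have hkey : ∀ q : Fin 6 → ℚ, (∑ i : Fin 6, q i • ζ ^ (i : ℕ)) = 0 → ∀ i, q i = 0 :=
    Fintype.linearIndependent_iff.mp hLI
  have hkey' : ∀ a b c d e f : ℚ,
      (a:ℂ) + b*ζ + c*ζ^2 + d*ζ^3 + e*ζ^4 + f*ζ^5 = 0 →
      a = 0 ∧ b = 0 ∧ c = 0 ∧ d = 0 ∧ e = 0 ∧ f = 0 := by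
    intro a b c d e f h
    have h0 := hkey ![a, b, c, d, e, f] (by
      simp [Fin.sum_univ_succ, Rat.smul_def]
      linear_combination h)
    refine ⟨h0 0, h0 1, h0 2, h0 3, h0 4, h0 5⟩
  -- nonvanishing
  have hc1ne : c1 ≠ 0 := by
    intro h
    have := (hkey' (-4) 0 (-2) (-3) (-3) (-2) (by push_cast; linear_combination h - e1)).1
    norm_num at this
  have hc2ne : c2 ≠ 0 := by
    intro h
    have := (hkey' 2 0 1 (-2) (-2) 1 (by push_cast; linear_combination h - e2)).1
    norm_num at this
  have hc3ne : c3 ≠ 0 := by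
    intro h
    have := (hkey' 1 0 (-3) (-1) (-1) (-3) (by push_cast; linear_combination h - e3)).1
    norm_num at this
  -- reality
  have hconjζ : (starRingEnd ℂ) ζ = ζ⁻¹ := by
    rw [hζ, ← Complex.exp_conj, ← Complex.exp_neg]
    congr 1
    simp [map_div₀, Complex.conj_I, map_ofNat]
    ring
  have hconj1 : (starRingEnd ℂ) x1 = x1⁻¹ := by rw [hx1]; exact hconjζ
  have hconj2 : (starRingEnd ℂ) x2 = x2⁻¹ := by
    rw [hx2, map_pow, hconjζ, inv_pow]
  have hconj3 : (starRingEnd ℂ) x3 = x3⁻¹ := by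
    rw [hx3, map_pow, hconjζ, inv_pow]
  have him : ∀ z : ℂ, (starRingEnd ℂ) z = z → z.im = 0 := by
    intro z hz; exact Complex.conj_eq_iff_im.mp hz
  have him1 : c1.im = 0 := him _ (by
    rw [hc1]
    simp only [map_sub, map_mul, map_pow, map_inv₀, hconj2, hconj3, inv_inv]
    ring)
  have him2 : c2.im = 0 := him _ (by
    rw [hc2]
    simp only [map_sub, map_mul, map_pow, map_inv₀, hconj1, hconj3, inv_inv]
    ring)
  have him3 : c3.im = 0 := him _ (by
    rw [hc3]
    simp only [map_sub, map_mul, map_pow, map_inv₀, hconj1, hconj2, inv_inv]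
    ring)
  refine ⟨by rw [hc1, hc2, hc3]; ring, by rw [hc1, hc2, hc3]; ring,
    ⟨hc1ne, hc2ne, hc3ne⟩, ⟨him1, him2, him3⟩, ?_⟩
  rw [Fintype.linearIndependent_iff]
  intro g hg
  have hg' : (g 0 : ℂ) * c1 + (g 1 : ℂ) * c2 + (g 2 : ℂ) * c3 = 0 := by
    have := hg
    rw [Fin.sum_univ_three] at this
    simp only [Matrix.cons_val_zero, Matrix.cons_val_one, Matrix.head_cons,
      Matrix.cons_val_two, Matrix.tail_cons, Rat.smul_def] at this
    have h2 := congrArg (· * c1) this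
    simp only [zero_mul] at h2
    field_simp at h2
    linear_combination h2
  set a := g 0; set b := g 1; set c := g 2
  rw [e1, e2, e3] at hg'
  have hq := hkey' (-4*a + 2*b + c) 0 (-2*a + b - 3*c) (-3*a - 2*b - c)
      (-3*a - 2*b - c) (-2*a + b - 3*c) (by push_cast; linear_combination hg')
  obtain ⟨q0, -, q2, q3, -, -⟩ := hq
  have ha : a = 0 := by linarith
  have hb : b = 0 := by linarith
  have hc : c = 0 := by linarith
  intro i
  fin_cases i
  · exact ha
  · exact hb
  · exact hc
end
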